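/- arXiv:2410.23155 — 3 statements merged into one kernel-verified Lean document; each statement's English description precedes it below -/
import Mathlib

section
/- Let Σ_X be a symmetric positive definite n×n matrix with whitening matrix W (so W⁻¹W⁻ᵀ = Σ_X). For any n×n matrix B with I − B invertible, there exists a diagonal matrix Σ with Σ_X = (I−B)⁻¹ Σ (I−B)⁻ᵀ if and only if there exists a matrix Q with Q Qᵀ diagonal such that B = I − Q W. -/
open Matrix

lemma posDef_mul_transpose_self_of_isUnit {n : ℕ} (Q : Matrix (Fin n) (Fin n) ℝ)
    (h : IsUnit Q.det) : (Q * Qᵀ).PosDef := by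
  have hdt : IsUnit Qᵀ.det := by rwa [det_transpose]
  refine PosDef.of_dotProduct_mulVec_pos ?_ ?_
  · simpa using isHermitian_mul_conjTranspose_self Q
  · intro x hx
    have hy : Qᵀ *ᵥ x ≠ 0 := by
      intro h0
      apply hx
      have := congrArg (fun v => (Qᵀ)⁻¹ *ᵥ v) h0
      simpa [mulVec_mulVec, nonsing_inv_mul _ hdt] using this
    have key : star x ⬝ᵥ (Q * Qᵀ) *ᵥ x = (Qᵀ *ᵥ x) ⬝ᵥ (Qᵀ *ᵥ x) := by
      rw [star_trivial, ← mulVec_mulVec, dotProduct_mulVec, ← mulVec_transpose]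
    rw [key]
    have hne : ∃ i, (Qᵀ *ᵥ x) i ≠ 0 := by
      by_contra hc
      push_neg at hc
      exact hy (funext hc)
    obtain ⟨i, hi⟩ := hne
    exact Finset.sum_pos' (fun j _ => mul_self_nonneg _)
      ⟨i, Finset.mem_univ i, mul_self_pos.mpr hi⟩

/-- `Σ_X = (I-B)⁻¹ Σ (I-B)⁻ᵀ` for some diagonal (positive definite) `Σ` iff
`B = I - Q W` for some (invertible) matrix `Q` with `Q Qᵀ` diagonal, where `W` is the
whitening matrix of `Σ_X`, i.e. `W⁻¹ W⁻ᵀ = Σ_X`. -/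
theorem mem_BX_iff_exists_scaledOrthogonal {n : ℕ} (Sx W B : Matrix (Fin n) (Fin n) ℝ)
    (hW : W.PosDef) (hWsymm : Wᵀ = W) (hWX : W⁻¹ * (W⁻¹)ᵀ = Sx)
    (hB : IsUnit (1 - B).det) :
    (∃ S : Matrix (Fin n) (Fin n) ℝ, S.IsDiag ∧ S.PosDef ∧
        Sx = (1 - B)⁻¹ * S * ((1 - B)⁻¹)ᵀ) ↔
      (∃ Q : Matrix (Fin n) (Fin n) ℝ, IsUnit Q.det ∧ (Q * Qᵀ).IsDiag ∧ B = 1 - Q * W) := by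
  have hWdet : IsUnit W.det := hW.det_pos.ne'.isUnit
  have hWinvdet : IsUnit (W⁻¹).det := by
    rw [det_nonsing_inv]
    exact hWdet.ringInverse
  constructor
  · rintro ⟨S, hdiag, hpos, hSx⟩
    refine ⟨(1 - B) * W⁻¹, by rw [det_mul]; exact hB.mul hWinvdet, ?_, ?_⟩
    · have : ((1 - B) * W⁻¹) * ((1 - B) * W⁻¹)ᵀ = S := by
        rw [transpose_mul, ← mul_assoc, mul_assoc (1 - B), hWX, hSx]
        rw [← mul_assoc, ← mul_assoc, mul_nonsing_inv _ hB, one_mul,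
          mul_assoc, ← transpose_mul, mul_nonsing_inv _ hB, transpose_one, mul_one]
      rw [this]; exact hdiag
    · rw [mul_assoc, nonsing_inv_mul _ hWdet, mul_one, sub_sub_cancel]
  · rintro ⟨Q, hQ, hdiag, hBQ⟩
    refine ⟨Q * Qᵀ, hdiag, posDef_mul_transpose_self_of_isUnit Q hQ, ?_⟩
    have hQt : IsUnit Qᵀ.det := by rwa [det_transpose]
    have h1B : 1 - B = Q * W := by rw [hBQ, sub_sub_cancel]
    rw [h1B, Matrix.mul_inv_rev, ← hWX]
    rw [transpose_mul, transpose_nonsing_inv, transpose_nonsing_inv]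
    symm
    calc W⁻¹ * Q⁻¹ * (Q * Qᵀ) * (Qᵀ⁻¹ * Wᵀ⁻¹)
        = W⁻¹ * (Q⁻¹ * Q) * (Qᵀ * Qᵀ⁻¹) * Wᵀ⁻¹ := by simp only [mul_assoc]
      _ = W⁻¹ * Wᵀ⁻¹ := by
          rw [nonsing_inv_mul _ hQ, mul_nonsing_inv _ hQt, mul_one, mul_one]
end

section
/- Let w₁, …, wₙ be linearly independent in ℝⁿ and q₁, …, qₙ produced by the reverse Gram–Schmidt recursion. If a permutation π' agrees with π on all positions outside an interval [l, r] and the sets {π(k) : k in [l,r]} and {π'(k) : k in [l,r]} of indices are equal, then the vectors q constructed from the reordered family agree at all positions k < l and k > r with those constructed from the original family. -/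
open RealInnerProductSpace Finset

theorem qwo_aux {n : ℕ} (w : Fin n → EuclideanSpace ℝ (Fin n))
    (hw : LinearIndependent ℝ w) (σ : Equiv.Perm (Fin n))
    (res q : Fin n → EuclideanSpace ℝ (Fin n))
    (hres : ∀ i : Fin n,
      res i = w (σ i) - ∑ j ∈ Finset.Ioi i, (⟪w (σ i), q j⟫ / ‖q j‖ ^ 2) • q j)
    (hq : ∀ i : Fin n, q i = (⟪res i, w (σ i)⟫)⁻¹ • res i) :
    ∀ i : Fin n,
      (∀ u ∈ Submodule.span ℝ ((w ∘ σ) '' Set.Ioi i), ⟪u, res i⟫ = 0) ∧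
      Submodule.span ℝ (q '' Set.Ici i) = Submodule.span ℝ ((w ∘ σ) '' Set.Ici i) ∧
      ⟪res i, w (σ i)⟫ = ‖res i‖ ^ 2 ∧ res i ≠ 0 := by
  suffices H : ∀ m : ℕ, ∀ i : Fin n, n - i.val ≤ m →
      (∀ u ∈ Submodule.span ℝ ((w ∘ σ) '' Set.Ioi i), ⟪u, res i⟫ = 0) ∧
      Submodule.span ℝ (q '' Set.Ici i) = Submodule.span ℝ ((w ∘ σ) '' Set.Ici i) ∧
      ⟪res i, w (σ i)⟫ = ‖res i‖ ^ 2 ∧ res i ≠ 0 by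
    exact fun i => H n i (Nat.sub_le _ _)
  intro m
  induction m with
  | zero => intro i hi; exact absurd hi (by have := i.isLt; omega)
  | succ m IH =>
    intro i _hi
    -- IH applies to every j > i
    have IHgt : ∀ j : Fin n, i < j →
        (∀ u ∈ Submodule.span ℝ ((w ∘ σ) '' Set.Ioi j), ⟪u, res j⟫ = 0) ∧
        Submodule.span ℝ (q '' Set.Ici j) = Submodule.span ℝ ((w ∘ σ) '' Set.Ici j) ∧
        ⟪res j, w (σ j)⟫ = ‖res j‖ ^ 2 ∧ res j ≠ 0 := by
      intro j hj
      apply IH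
      have : i.val < j.val := hj
      omega
    have hqne : ∀ j : Fin n, i < j → q j ≠ 0 := by
      intro j hj
      obtain ⟨-, -, h1, h2⟩ := IHgt j hj
      rw [hq j, h1]
      intro hcon
      rcases smul_eq_zero.mp hcon with h | h
      · exact h2 (by simpa [norm_eq_zero] using inv_eq_zero.mp h)
      · exact h2 h
    have hqspan : ∀ j : Fin n, i < j →
        q j ∈ Submodule.span ℝ ((w ∘ σ) '' Set.Ici j) := by
      intro j hj
      rw [← (IHgt j hj).2.1]
      exact Submodule.subset_span ⟨j, le_refl j, rfl⟩
    have horth : ∀ j j' : Fin n, i < j → i < j' → j ≠ j' → ⟪q j, q j'⟫ = 0 := by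
      have key : ∀ j j' : Fin n, i < j → i < j' → j < j' → ⟪q j, q j'⟫ = 0 := by
        intro j j' hj hj' hlt
        have hmem : q j' ∈ Submodule.span ℝ ((w ∘ σ) '' Set.Ioi j) :=
          Submodule.span_mono (Set.image_mono (fun x hx => lt_of_lt_of_le hlt hx))
            (hqspan j' hj')
        have h0 : ⟪q j', res j⟫ = 0 := (IHgt j hj).1 _ hmem
        have h0' : ⟪res j, q j'⟫ = 0 := by rw [real_inner_comm]; exact h0
        rw [hq j, real_inner_smul_left, h0', mul_zero]
      intro j j' hj hj' hne
      rcases lt_or_gt_of_ne hne with h | h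
      · exact key j j' hj hj' h
      · rw [real_inner_comm]; exact key j' j hj' hj h
    have hresq : ∀ j : Fin n, i < j → ⟪res j, q j⟫ ≠ 0 → True := fun _ _ _ => trivial
    -- orthogonality of res i to each q j, j > i
    have hresiq : ∀ j : Fin n, i < j → ⟪res i, q j⟫ = 0 := by
      intro j hj
      rw [hres i, inner_sub_left, sum_inner]
      have hsum : (∑ j' ∈ Finset.Ioi i, ⟪(⟪w (σ i), q j'⟫ / ‖q j'‖ ^ 2) • q j', q j⟫)
          = ⟪w (σ i), q j⟫ := by
        rw [Finset.sum_eq_single j]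
        · rw [real_inner_smul_left, real_inner_self_eq_norm_sq]
          have : ‖q j‖ ^ 2 ≠ 0 := by
            simpa [pow_eq_zero_iff, norm_eq_zero] using hqne j hj
          field_simp
          rw [mul_div_assoc, div_self (norm_ne_zero_iff.mpr (hqne j hj)), mul_one]
        · intro j' hj' hne
          rw [real_inner_smul_left, horth j' j (Finset.mem_Ioi.mp hj') hj hne, mul_zero]
        · intro hcon
          exact absurd (Finset.mem_Ioi.mpr hj) hcon
      rw [hsum, sub_self]
    -- res i is orthogonal to the span of q over Ioi i
    have hspanq_orth : ∀ u ∈ Submodule.span ℝ (q '' Set.Ioi i), ⟪u, res i⟫ = 0 := by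
      intro u hu
      induction hu using Submodule.span_induction with
      | mem x hx =>
        obtain ⟨j, hj, rfl⟩ := hx
        rw [real_inner_comm]; exact hresiq j hj
      | zero => simp
      | add x y _ _ hx hy => rw [inner_add_left, hx, hy, add_zero]
      | smul c x _ hx => rw [real_inner_smul_left, hx, mul_zero]
    -- span (q '' Ioi i) ≤ span (w∘σ '' Ioi i)
    have hKsub2 : Submodule.span ℝ (q '' Set.Ioi i)
        ≤ Submodule.span ℝ ((w ∘ σ) '' Set.Ioi i) := by
      rw [Submodule.span_le]
      rintro x ⟨j, hj, rfl⟩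
      exact Submodule.span_mono (Set.image_mono (fun y hy => lt_of_lt_of_le (Set.mem_Ioi.mp hj) hy))
        (hqspan j hj)
    -- span (w∘σ '' Ioi i) ≤ span (q '' Ioi i)
    have hKsub : Submodule.span ℝ ((w ∘ σ) '' Set.Ioi i)
        ≤ Submodule.span ℝ (q '' Set.Ioi i) := by
      rw [Submodule.span_le]
      rintro x ⟨j, hj, rfl⟩
      have : (w ∘ σ) j ∈ Submodule.span ℝ (q '' Set.Ici j) := by
        rw [(IHgt j hj).2.1]
        exact Submodule.subset_span ⟨j, le_refl j, rfl⟩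
      exact Submodule.span_mono (Set.image_mono (fun y hy => lt_of_lt_of_le (Set.mem_Ioi.mp hj) hy)) this
    have hs_mem : (∑ j ∈ Finset.Ioi i, (⟪w (σ i), q j⟫ / ‖q j‖ ^ 2) • q j)
        ∈ Submodule.span ℝ (q '' Set.Ioi i) := by
      apply Submodule.sum_mem
      intro j hj
      exact Submodule.smul_mem _ _
        (Submodule.subset_span ⟨j, Finset.mem_Ioi.mp hj, rfl⟩)
    have hresne : res i ≠ 0 := by
      intro hcon
      have hmem : w (σ i) ∈ Submodule.span ℝ ((w ∘ σ) '' Set.Ioi i) := by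
        have := hres i
        rw [hcon, eq_comm, sub_eq_zero] at this
        rw [this]; exact hKsub2 hs_mem
      rw [Set.image_comp] at hmem
      have hni : σ i ∉ σ '' Set.Ioi i := by
        rintro ⟨j, hj, hje⟩
        exact absurd (σ.injective hje) (ne_of_gt hj)
      exact hw.notMem_span_image hni hmem
    have hinner : ⟪res i, w (σ i)⟫ = ‖res i‖ ^ 2 := by
      have hws : w (σ i) = res i + ∑ j ∈ Finset.Ioi i, (⟪w (σ i), q j⟫ / ‖q j‖ ^ 2) • q j := by
        rw [hres i]; abel
      have h2 : ⟪res i, ∑ j ∈ Finset.Ioi i, (⟪w (σ i), q j⟫ / ‖q j‖ ^ 2) • q j⟫ = 0 := by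
        rw [real_inner_comm]; exact hspanq_orth _ hs_mem
      rw [hws, inner_add_right, real_inner_self_eq_norm_sq, h2, add_zero]
    -- orthogonality part
    have horthpart : ∀ u ∈ Submodule.span ℝ ((w ∘ σ) '' Set.Ioi i), ⟪u, res i⟫ = 0 :=
      fun u hu => hspanq_orth u (hKsub hu)
    refine ⟨horthpart, ?_, hinner, hresne⟩
    -- span equality
    have hIci : Set.Ici i = insert i (Set.Ioi i) := by
      ext x; simp [le_iff_lt_or_eq, eq_comm, or_comm]
    apply le_antisymm
    · rw [Submodule.span_le]
      rintro x ⟨j, hj, rfl⟩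
      rcases eq_or_lt_of_le (Set.mem_Ici.mp hj) with h | h
      · subst h
        rw [hq i, hres i]
        apply Submodule.smul_mem
        apply Submodule.sub_mem
        · exact Submodule.subset_span ⟨i, le_refl i, rfl⟩
        · exact Submodule.span_mono (Set.image_mono Set.Ioi_subset_Ici_self) (hKsub2 hs_mem)
      · exact Submodule.span_mono (Set.image_mono Set.Ioi_subset_Ici_self)
          (hKsub2 (Submodule.subset_span ⟨j, h, rfl⟩))
    · rw [Submodule.span_le]
      rintro x ⟨j, hj, rfl⟩
      rcases eq_or_lt_of_le (Set.mem_Ici.mp hj) with h | h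
      · subst h
        have hc : ⟪res i, w (σ i)⟫ ≠ 0 := by
          rw [hinner]
          simpa [pow_eq_zero_iff, norm_eq_zero] using hresne
        have hres_eq : res i = ⟪res i, w (σ i)⟫ • q i := by
          rw [hq i, smul_inv_smul₀ hc]
        have hws : (w ∘ σ) i = res i + ∑ j' ∈ Finset.Ioi i, (⟪w (σ i), q j'⟫ / ‖q j'‖ ^ 2) • q j' := by
          simp only [Function.comp_apply]; rw [hres i]; abel
        rw [hws, hres_eq]
        apply Submodule.add_mem
        · exact Submodule.smul_mem _ _ (Submodule.subset_span ⟨i, le_refl i, rfl⟩)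
        · exact Submodule.span_mono (Set.image_mono Set.Ioi_subset_Ici_self) hs_mem
      · have : (w ∘ σ) j ∈ Submodule.span ℝ (q '' Set.Ici j) := by
          rw [(IHgt j h).2.1]
          exact Submodule.subset_span ⟨j, le_refl j, rfl⟩
        exact Submodule.span_mono (Set.image_mono (fun y hy => le_of_lt (lt_of_lt_of_le h hy))) this
/-- If two permutations agree outside the block `[l, r]` and permute the same set of indices
inside the block, then the reverse Gram–Schmidt vectors computed for the two reordered
families agree at every position outside the block. -/
theorem qwo_update_block {n : ℕ} (w : Fin n → EuclideanSpace ℝ (Fin n))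
    (hw : LinearIndependent ℝ w)
    (π π' : Equiv.Perm (Fin n)) (l r : Fin n)
    (hagree : ∀ k : Fin n, (k < l ∨ r < k) → π k = π' k)
    (hset : (π : Fin n → Fin n) '' Set.Icc l r = (π' : Fin n → Fin n) '' Set.Icc l r)
    (res res' q q' : Fin n → EuclideanSpace ℝ (Fin n))
    (hres : ∀ i : Fin n,
      res i = w (π i) - ∑ j ∈ Finset.Ioi i, (⟪w (π i), q j⟫ / ‖q j‖ ^ 2) • q j)
    (hq : ∀ i : Fin n, q i = (⟪res i, w (π i)⟫)⁻¹ • res i)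
    (hres' : ∀ i : Fin n,
      res' i = w (π' i) - ∑ j ∈ Finset.Ioi i, (⟪w (π' i), q' j⟫ / ‖q' j‖ ^ 2) • q' j)
    (hq' : ∀ i : Fin n, q' i = (⟪res' i, w (π' i)⟫)⁻¹ • res' i) :
    ∀ k : Fin n, (k < l ∨ r < k) → q k = q' k := by
  have A := qwo_aux w hw π res q hres hq
  have A' := qwo_aux w hw π' res' q' hres' hq'
  intro k hk
  have hπk : π k = π' k := hagree k hk
  -- image equality on Ioi k
  have himg : (π : Fin n → Fin n) '' Set.Ioi k = (π' : Fin n → Fin n) '' Set.Ioi k := by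
    rcases hk with hk | hk
    · have hsub : Set.Icc l r ⊆ Set.Ioi k := fun m hm => lt_of_lt_of_le hk hm.1
      have hdecomp : Set.Ioi k = Set.Icc l r ∪ (Set.Ioi k \ Set.Icc l r) :=
        (Set.union_diff_cancel hsub).symm
      have hrest : (π : Fin n → Fin n) '' (Set.Ioi k \ Set.Icc l r)
          = (π' : Fin n → Fin n) '' (Set.Ioi k \ Set.Icc l r) := by
        apply Set.image_congr
        intro m hm
        apply hagree
        rcases not_and_or.mp (fun h => hm.2 ⟨h.1, h.2⟩) with h | h
        · exact Or.inl (not_le.mp h)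
        · exact Or.inr (not_le.mp h)
      rw [hdecomp, Set.image_union, Set.image_union, hset, hrest]
    · apply Set.image_congr
      intro m hm
      exact hagree m (Or.inr (lt_trans hk hm))
  have himgw : (w ∘ π) '' Set.Ioi k = (w ∘ π') '' Set.Ioi k := by
    rw [Set.image_comp, Set.image_comp, himg]
  set K := Submodule.span ℝ ((w ∘ π) '' Set.Ioi k) with hK
  have hK' : Submodule.span ℝ ((w ∘ π') '' Set.Ioi k) = K := by rw [hK, himgw]
  -- the sums lie in K
  have hs_mem : (∑ j ∈ Finset.Ioi k, (⟪w (π k), q j⟫ / ‖q j‖ ^ 2) • q j) ∈ K := by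
    apply Submodule.sum_mem
    intro j hj
    apply Submodule.smul_mem
    have hmem : q j ∈ Submodule.span ℝ ((w ∘ π) '' Set.Ici j) := by
      rw [← (A j).2.1]; exact Submodule.subset_span ⟨j, le_refl j, rfl⟩
    exact Submodule.span_mono
      (Set.image_mono (fun y hy => lt_of_lt_of_le (Finset.mem_Ioi.mp hj) hy)) hmem
  have hs'_mem : (∑ j ∈ Finset.Ioi k, (⟪w (π' k), q' j⟫ / ‖q' j‖ ^ 2) • q' j) ∈ K := by
    rw [← hK']
    apply Submodule.sum_mem
    intro j hj
    apply Submodule.smul_mem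
    have hmem : q' j ∈ Submodule.span ℝ ((w ∘ π') '' Set.Ici j) := by
      rw [← (A' j).2.1]; exact Submodule.subset_span ⟨j, le_refl j, rfl⟩
    exact Submodule.span_mono
      (Set.image_mono (fun y hy => lt_of_lt_of_le (Finset.mem_Ioi.mp hj) hy)) hmem
  -- the difference of residuals lies in K and is orthogonal to itself
  have hd_mem : res k - res' k ∈ K := by
    rw [hres k, hres' k, hπk]
    have : w (π' k) - (∑ j ∈ Finset.Ioi k, (⟪w (π' k), q j⟫ / ‖q j‖ ^ 2) • q j)
        - (w (π' k) - ∑ j ∈ Finset.Ioi k, (⟪w (π' k), q' j⟫ / ‖q' j‖ ^ 2) • q' j)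
        = (∑ j ∈ Finset.Ioi k, (⟪w (π' k), q' j⟫ / ‖q' j‖ ^ 2) • q' j)
          - ∑ j ∈ Finset.Ioi k, (⟪w (π' k), q j⟫ / ‖q j‖ ^ 2) • q j := by abel
    rw [this]
    exact Submodule.sub_mem _ hs'_mem (by rw [← hπk]; exact hs_mem)
  have hdd : ⟪res k - res' k, res k - res' k⟫ = (0 : ℝ) := by
    rw [inner_sub_right]
    rw [(A k).1 _ hd_mem, (A' k).1 _ (by rw [hK']; exact hd_mem), sub_zero]
  have hres_eq : res k = res' k := by
    have := inner_self_eq_zero.mp hdd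
    rwa [sub_eq_zero] at this
  rw [hq k, hq' k, hres_eq, hπk]
end

section
/- Let Σ_X be an n×n symmetric positive definite matrix with spectral decomposition Σ_X = U S Uᵀ and whitening matrix W = U S^{-1/2} Uᵀ. Fix 1 ≤ j ≤ n, write C = rows 1..j of W and D = rows j+1..n of W, and let E be the j×n matrix whose k-th row is the residual of C[k] after orthogonal projection onto the row space of D. Then E Eᵀ equals the inverse of the top-left j×j block of Σ_X. -/
open Matrix

/-- The index equivalence splitting `Fin n` into the first `j` and last `n - j` indices. -/
def EEtAux.blockEquiv {n j : ℕ} (hj : j ≤ n) : Fin j ⊕ Fin (n - j) ≃ Fin n :=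
  finSumFinEquiv.trans (finCongr (Nat.add_sub_cancel' hj))

lemma EEtAux.blockEquiv_inl {n j : ℕ} (hj : j ≤ n) (i : Fin j) :
    blockEquiv hj (Sum.inl i) = Fin.castLE hj i := by
  apply Fin.ext
  simp [blockEquiv]

lemma EEtAux.blockEquiv_inr {n j : ℕ} (hj : j ≤ n) (k : Fin (n - j)) :
    blockEquiv hj (Sum.inr k) = (⟨j + k.1, Nat.add_lt_of_lt_sub' k.2⟩ : Fin n) := by
  apply Fin.ext
  simp [blockEquiv]

/-- Positive definiteness is preserved by `submatrix` along an equivalence. -/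
lemma EEtAux.posDef_submatrix_equiv {m n : Type*} [Fintype m] [Fintype n]
    {M : Matrix n n ℝ} (hM : M.PosDef) (e : m ≃ n) : (M.submatrix e e).PosDef := by
  refine PosDef.of_dotProduct_mulVec_pos (hM.1.submatrix e) fun x hx => ?_
  have hx' : x ∘ e.symm ≠ 0 := fun h0 => hx (funext fun i => by
    simpa using congrFun h0 (e i))
  have h := hM.dotProduct_mulVec_pos hx'
  rw [submatrix_mulVec_equiv]
  convert h using 1
  simp only [star_trivial, dotProduct, Function.comp]
  exact Fintype.sum_equiv e _ _ (fun i => by simp)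

/-- The bottom-right block of a positive definite block matrix is positive definite. -/
lemma EEtAux.posDef_toBlocks₂₂ {m n : Type*} [Fintype m] [Fintype n]
    {A : Matrix m m ℝ} {B : Matrix m n ℝ} {C : Matrix n m ℝ} {Δ : Matrix n n ℝ}
    (h : (fromBlocks A B C Δ).PosDef) : Δ.PosDef := by
  refine PosDef.of_dotProduct_mulVec_pos ?_ ?_
  · have h1 := congrArg Matrix.toBlocks₂₂ h.1
    simpa [fromBlocks_conjTranspose, fromBlocks_transpose, IsSymm] using h1
  · intro x hx
    have hy : (Sum.elim (0 : m → ℝ) x) ≠ 0 := fun h0 => hx (funext fun i => congrFun h0 (Sum.inr i))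
    have h2 := h.dotProduct_mulVec_pos hy
    simpa [fromBlocks_mulVec, sumElim_dotProduct_sumElim] using h2

open EEtAux in
/-- With `W` the whitening matrix of `Σ_X = U S Uᵀ`, `C` the first `j` rows of `W`,
`D` the last `n - j` rows, `P` the orthogonal projection onto the row space of `D`,
and `E = C (I - P)` the matrix of residuals, we have `E Eᵀ = (Σ_X restricted to the
first j coordinates)⁻¹`. -/
theorem EEt_eq_inv_cov_block {n j : ℕ} (hj : j ≤ n)
    (Sx U W : Matrix (Fin n) (Fin n) ℝ) (s : Fin n → ℝ) (hs : ∀ i, 0 < s i)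
    (hU : U * Uᵀ = 1)
    (hSx : Sx = U * Matrix.diagonal s * Uᵀ)
    (hW : W = U * Matrix.diagonal (fun i => (Real.sqrt (s i))⁻¹) * Uᵀ)
    (C : Matrix (Fin j) (Fin n) ℝ) (D : Matrix (Fin (n - j)) (Fin n) ℝ)
    (hC : C = W.submatrix (Fin.castLE hj) id)
    (hD : D = W.submatrix (fun k : Fin (n - j) => (⟨j + k.1, by omega⟩ : Fin n)) id)
    (P : Matrix (Fin n) (Fin n) ℝ) (hP : P = Dᵀ * (D * Dᵀ)⁻¹ * D)
    (E : Matrix (Fin j) (Fin n) ℝ) (hE : E = C * (1 - P)) :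
    E * Eᵀ = (Sx.submatrix (Fin.castLE hj) (Fin.castLE hj))⁻¹ := by
  have hUtU : Uᵀ * U = 1 := mul_eq_one_comm.mp hU
  -- product of two symmetric `U d Uᵀ` matrices
  have key : ∀ a b : Fin n → ℝ,
      (U * diagonal a * Uᵀ) * (U * diagonal b * Uᵀ)
        = U * diagonal (fun i => a i * b i) * Uᵀ := by
    intro a b
    simp only [Matrix.mul_assoc]
    rw [← Matrix.mul_assoc Uᵀ U (diagonal b * Uᵀ), hUtU, Matrix.one_mul,
      ← Matrix.mul_assoc (diagonal a) (diagonal b) Uᵀ, diagonal_mul_diagonal]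
  have hWsymm : Wᵀ = W := by
    rw [hW]
    simp [Matrix.transpose_mul, Matrix.mul_assoc]
  have hWW : W * W = U * diagonal (fun i => (s i)⁻¹) * Uᵀ := by
    have hfun : (fun i => (Real.sqrt (s i))⁻¹ * (Real.sqrt (s i))⁻¹) = fun i => (s i)⁻¹ :=
      funext fun i => by rw [← mul_inv, Real.mul_self_sqrt (hs i).le]
    rw [hW, key, hfun]
  have hSxM : Sx * (W * Wᵀ) = 1 := by
    rw [hWsymm, hSx, hWW, key]
    have h1 : (fun i => s i * (s i)⁻¹) = fun _ => (1 : ℝ) :=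
      funext fun i => mul_inv_cancel₀ (hs i).ne'
    rw [h1, diagonal_one, Matrix.mul_one, hU]
  have hinvM : (W * Wᵀ)⁻¹ = Sx := inv_eq_left_inv hSxM
  -- `W * Wᵀ` is positive definite
  have hMpsd : (W * Wᵀ).PosSemidef := by
    have h := posSemidef_self_mul_conjTranspose W
    have hT : Wᴴ = Wᵀ := by ext i k; simp
    rwa [hT] at h
  have hMpd : (W * Wᵀ).PosDef := by
    refine PosDef.of_dotProduct_mulVec_pos hMpsd.1 fun x hx => lt_of_le_of_ne (hMpsd.dotProduct_mulVec_nonneg x) fun h => hx ?_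
    have h0 := (hMpsd.dotProduct_mulVec_zero_iff x).mp h.symm
    have hx0 : x = Sx *ᵥ ((W * Wᵀ) *ᵥ x) := by
      rw [mulVec_mulVec, hSxM, one_mulVec]
    rw [h0, mulVec_zero] at hx0
    exact hx0
  set e := blockEquiv hj with he
  -- the reindexed `W` is `fromRows C D`
  have hV : W.submatrix (⇑e) id = fromRows C D := by
    ext i l
    cases i with
    | inl i => simp [he, blockEquiv_inl, hC]
    | inr k => simp [he, blockEquiv_inr, hD]
  have hblocks : (W * Wᵀ).submatrix (⇑e) (⇑e)
      = fromBlocks (C * Cᵀ) (C * Dᵀ) (D * Cᵀ) (D * Dᵀ) := by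
    rw [← submatrix_mul_equiv W Wᵀ (⇑e) (Equiv.refl (Fin n)) (⇑e), Equiv.coe_refl,
      ← transpose_submatrix, hV, transpose_fromRows, fromRows_mul_fromCols]
  have hfbpd : (fromBlocks (C * Cᵀ) (C * Dᵀ) (D * Cᵀ) (D * Dᵀ)).PosDef :=
    hblocks ▸ posDef_submatrix_equiv hMpd e
  have hΔpd : (D * Dᵀ).PosDef := posDef_toBlocks₂₂ hfbpd
  have hΔdet : IsUnit (D * Dᵀ).det := (isUnit_iff_isUnit_det _).mp hΔpd.isUnit
  haveI : Invertible (D * Dᵀ) := invertibleOfIsUnitDet _ hΔdet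
  haveI : Invertible (fromBlocks (C * Cᵀ) (C * Dᵀ) (D * Cᵀ) (D * Dᵀ)) :=
    invertibleOfIsUnitDet _ ((isUnit_iff_isUnit_det _).mp hfbpd.isUnit)
  haveI hS0inv : Invertible (C * Cᵀ - C * Dᵀ * ⅟(D * Dᵀ) * (D * Cᵀ)) :=
    invertibleOfFromBlocks₂₂Invertible _ _ _ _
  -- identify the top-left block of `Sx`
  have hSxe : Sx.submatrix (⇑e) (⇑e)
      = (fromBlocks (C * Cᵀ) (C * Dᵀ) (D * Cᵀ) (D * Dᵀ))⁻¹ := by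
    rw [← hblocks, inv_submatrix_equiv, hinvM]
  have hfbinv : (fromBlocks (C * Cᵀ) (C * Dᵀ) (D * Cᵀ) (D * Dᵀ))⁻¹
      = fromBlocks (⅟(C * Cᵀ - C * Dᵀ * ⅟(D * Dᵀ) * (D * Cᵀ)))
          (-(⅟(C * Cᵀ - C * Dᵀ * ⅟(D * Dᵀ) * (D * Cᵀ)) * (C * Dᵀ) * ⅟(D * Dᵀ)))
          (-(⅟(D * Dᵀ) * (D * Cᵀ) * ⅟(C * Cᵀ - C * Dᵀ * ⅟(D * Dᵀ) * (D * Cᵀ))))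
          (⅟(D * Dᵀ) + ⅟(D * Dᵀ) * (D * Cᵀ) * ⅟(C * Cᵀ - C * Dᵀ * ⅟(D * Dᵀ) * (D * Cᵀ))
            * (C * Dᵀ) * ⅟(D * Dᵀ)) := by
    rw [← invOf_eq_nonsing_inv, invOf_fromBlocks₂₂_eq]
  have htop : Sx.submatrix (Fin.castLE hj) (Fin.castLE hj)
      = ⅟(C * Cᵀ - C * Dᵀ * ⅟(D * Dᵀ) * (D * Cᵀ)) := by
    have hss : Sx.submatrix (Fin.castLE hj) (Fin.castLE hj)
        = (Sx.submatrix (⇑e) (⇑e)).submatrix Sum.inl Sum.inl := by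
      rw [submatrix_submatrix]
      congr 1
    rw [hss, hSxe, hfbinv]
    ext i k
    simp [fromBlocks]
  -- compute `E * Eᵀ`
  have hPt : Pᵀ = P := by
    rw [hP]
    simp [Matrix.transpose_mul, transpose_nonsing_inv, Matrix.mul_assoc]
  have hPP : P * P = P := by
    rw [hP]
    simp only [Matrix.mul_assoc]
    rw [← Matrix.mul_assoc D Dᵀ ((D * Dᵀ)⁻¹ * D),
      ← Matrix.mul_assoc (D * Dᵀ) (D * Dᵀ)⁻¹ D, Matrix.mul_nonsing_inv _ hΔdet,
      Matrix.one_mul]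
  have hproj : (1 - P) * (1 - P) = 1 - P := by
    simp only [Matrix.mul_sub, Matrix.sub_mul, Matrix.mul_one, Matrix.one_mul, hPP]
    abel
  have hEEt : E * Eᵀ = C * Cᵀ - C * Dᵀ * (D * Dᵀ)⁻¹ * (D * Cᵀ) := by
    rw [hE, Matrix.transpose_mul, Matrix.transpose_sub, Matrix.transpose_one, hPt]
    calc C * (1 - P) * ((1 - P) * Cᵀ)
        = C * ((1 - P) * (1 - P)) * Cᵀ := by simp only [Matrix.mul_assoc]
      _ = C * (1 - P) * Cᵀ := by rw [hproj]
      _ = C * Cᵀ - C * Dᵀ * (D * Dᵀ)⁻¹ * (D * Cᵀ) := by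
          rw [hP, Matrix.mul_sub, Matrix.sub_mul, Matrix.mul_one]
          simp only [Matrix.mul_assoc]
  rw [htop, hEEt]
  have hfin : (⅟(C * Cᵀ - C * Dᵀ * ⅟(D * Dᵀ) * (D * Cᵀ)))⁻¹
      = C * Cᵀ - C * Dᵀ * ⅟(D * Dᵀ) * (D * Cᵀ) := inv_eq_right_inv (invOf_mul_self _)
  rw [hfin, invOf_eq_nonsing_inv]
end
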